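/- Let X be a metric space. The straight-line map H : I_p c([0,1]) → c([0,1]) given, for a coarse map g(x,t) = (ρ(x), tρ(x)/x) with ρ monotone, ρ(x) ≤ x, and x - ρ(x) → ∞ controlled, by H((x,t), s) = (x - s, t(x-s)/x) for 0 ≤ s ≤ x - ρ(x) (with p(x,t) = x - ρ(x) - 1), is a coarse homotopy from the identity of c([0,1]) to g, i.e., H is a coarse map with H((x,t),0) = (x,t) and H((x,t), x - ρ(x)) = g(x,t). -/

import Mathlib

open Metric Bornology Set

noncomputable section

/-- The metric cone over `[0,1]`: `c([0,1]) = {(x,t) : 0 ≤ t ≤ x} ⊆ ℝ²` with the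
Euclidean metric. -/
def c01 : Set (EuclideanSpace ℝ (Fin 2)) := {v | 0 ≤ v 1 ∧ v 1 ≤ v 0}

/-- A map between metric spaces is bornologous if it admits a control function. -/
def Bornologous {X Y : Type*} [PseudoMetricSpace X] [PseudoMetricSpace Y]
    (f : X → Y) : Prop :=
  ∃ ρ : ℝ → ℝ, ∀ x x', dist (f x) (f x') ≤ ρ (dist x x')

/-- A map is coarse if it is bornologous and preimages of bounded sets are bounded. -/
def CoarseMap {X Y : Type*} [PseudoMetricSpace X] [PseudoMetricSpace Y]
    (f : X → Y) : Prop :=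
  Bornologous f ∧ ∀ B : Set Y, Bornology.IsBounded B → Bornology.IsBounded (f ⁻¹' B)

/-- The `p`-cylinder `I_p X = {(x,s) ∈ X × [0,∞) : s ≤ p(x)+1}` with the `ℓ²` product
metric. -/
def Cyl {X : Type*} [MetricSpace X] (p : X → ℝ) : Type _ :=
  {q : WithLp 2 (X × ℝ) // 0 ≤ q.ofLp.2 ∧ q.ofLp.2 ≤ p q.ofLp.1 + 1}

instance {X : Type*} [MetricSpace X] (p : X → ℝ) : MetricSpace (Cyl p) := by
  unfold Cyl; infer_instance


private lemma sqrt_add_sq_le' {a b : ℝ} (ha : 0 ≤ a) (hb : 0 ≤ b) :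
    Real.sqrt (a^2 + b^2) ≤ a + b := by
  rw [show a + b = Real.sqrt ((a+b)^2) from (Real.sqrt_sq (by linarith)).symm]
  exact Real.sqrt_le_sqrt (by nlinarith)

private lemma aux_div_le {t x u : ℝ} (ht : 0 ≤ t) (htx : t ≤ x) (hu : 0 ≤ u) :
    t * u / x ≤ u := by
  rcases eq_or_lt_of_le (le_trans ht htx) with h | h
  · have : t = 0 := le_antisymm (h ▸ htx) ht
    simp [this, hu]
  · rw [div_le_iff₀ h]; nlinarith

private lemma key_bound {t x s t' x' s' : ℝ}
    (ht : 0 ≤ t) (htx : t ≤ x) (hs : 0 ≤ s) (hsx : s ≤ x)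
    (ht' : 0 ≤ t') (htx' : t' ≤ x') (hs' : 0 ≤ s') (hsx' : s' ≤ x') :
    |t * s / x - t' * s' / x'| ≤ |t - t'| + |s - s'| + |x - x'| := by
  have hx : 0 ≤ x := le_trans ht htx
  have hx' : 0 ≤ x' := le_trans ht' htx'
  rcases eq_or_lt_of_le hx with h0 | h0
  · have ht0 : t = 0 := le_antisymm (h0 ▸ htx) ht
    have hs0 : s = 0 := le_antisymm (h0 ▸ hsx) hs
    have h1 : t' * s' / x' ≤ s' := aux_div_le ht' htx' hs'
    have h2 : 0 ≤ t' * s' / x' := div_nonneg (mul_nonneg ht' hs') hx'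
    rw [ht0, hs0]
    simp only [zero_mul, zero_div, zero_sub, abs_neg]
    rw [abs_of_nonneg h2, abs_of_nonneg ht', abs_of_nonneg hs']
    have := abs_nonneg (x - x')
    linarith
  rcases eq_or_lt_of_le hx' with h0' | h0'
  · have ht0 : t' = 0 := le_antisymm (h0' ▸ htx') ht'
    have hs0 : s' = 0 := le_antisymm (h0' ▸ hsx') hs'
    have h1 : t * s / x ≤ s := aux_div_le ht htx hs
    have h2 : 0 ≤ t * s / x := div_nonneg (mul_nonneg ht hs) hx
    rw [ht0, hs0]
    simp only [zero_mul, zero_div, sub_zero]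
    rw [abs_of_nonneg h2, abs_of_nonneg ht, abs_of_nonneg hs]
    have := abs_nonneg (x - x')
    linarith
  · have hid : t*s/x - t'*s'/x' =
        (t - t')*(s'/x') + (s - s')*(t/x) + (x' - x)*((t/x)*(s'/x')) := by
      field_simp
      ring
    have hA : |s'/x'| ≤ 1 := by
      rw [abs_of_nonneg (div_nonneg hs' hx')]
      exact div_le_one_of_le₀ hsx' hx'
    have hB : |t/x| ≤ 1 := by
      rw [abs_of_nonneg (div_nonneg ht hx)]
      exact div_le_one_of_le₀ htx hx
    have k1 : |(t - t')*(s'/x')| ≤ |t - t'| := by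
      rw [abs_mul]; exact mul_le_of_le_one_right (abs_nonneg _) hA
    have k2 : |(s - s')*(t/x)| ≤ |s - s'| := by
      rw [abs_mul]; exact mul_le_of_le_one_right (abs_nonneg _) hB
    have k3 : |(x' - x)*((t/x)*(s'/x'))| ≤ |x - x'| := by
      rw [abs_mul, abs_mul, abs_sub_comm x' x]
      have h1 : |t/x| * |s'/x'| ≤ 1 := by
        nlinarith [abs_nonneg (t/x), abs_nonneg (s'/x')]
      exact mul_le_of_le_one_right (abs_nonneg _) h1
    calc |t*s/x - t'*s'/x'|
        = |(t - t')*(s'/x') + (s - s')*(t/x) + (x' - x)*((t/x)*(s'/x'))| := by rw [hid]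
      _ ≤ |(t - t')*(s'/x')| + |(s - s')*(t/x)| + |(x' - x)*((t/x)*(s'/x'))| :=
          abs_add_three _ _ _
      _ ≤ |t - t'| + |s - s'| + |x - x'| := by linarith

private lemma tsub_div' {t x s : ℝ} (ht : 0 ≤ t) (htx : t ≤ x) :
    t * (x - s) / x = t - t * s / x := by
  rcases eq_or_ne x 0 with h | h
  · have : t = 0 := le_antisymm (h ▸ htx) ht
    simp [this]
  · field_simp

private lemma coord_dist_le' (u w : EuclideanSpace ℝ (Fin 2)) (i : Fin 2) :
    |u i - w i| ≤ dist u w := by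
  rw [EuclideanSpace.dist_eq, show |u i - w i| = Real.sqrt ((u i - w i)^2) from
    (Real.sqrt_sq_eq_abs _).symm]
  apply Real.sqrt_le_sqrt
  have := Finset.single_le_sum (f := fun j => dist (u j) (w j)^2)
    (fun j _ => sq_nonneg _) (Finset.mem_univ i)
  simpa [Real.dist_eq, sq_abs] using this

private lemma euclid_dist_le' (u w : EuclideanSpace ℝ (Fin 2)) :
    dist u w ≤ |u 0 - w 0| + |u 1 - w 1| := by
  rw [EuclideanSpace.dist_eq, Fin.sum_univ_two]
  simp only [Real.dist_eq]
  calc Real.sqrt (|u 0 - w 0|^2 + |u 1 - w 1|^2) ≤ |u 0 - w 0| + |u 1 - w 1| :=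
    sqrt_add_sq_le' (abs_nonneg _) (abs_nonneg _)

private lemma withlp2_dist {α β : Type*} [PseudoMetricSpace α] [PseudoMetricSpace β]
    (f g : WithLp 2 (α × β)) :
    dist f g = Real.sqrt (dist f.ofLp.1 g.ofLp.1 ^ 2 + dist f.ofLp.2 g.ofLp.2 ^ 2) := by
  rw [WithLp.prod_dist_eq_add (by norm_num : 0 < (2:ENNReal).toReal), Real.sqrt_eq_rpow]
  have h1 : ((2:ENNReal).toReal) = (2:ℝ) := by norm_num
  rw [h1]
  show (dist f.ofLp.1 g.ofLp.1 ^ (2:ℝ) + dist f.ofLp.2 g.ofLp.2 ^ (2:ℝ)) ^ (1 / (2:ℝ)) =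
    (dist f.ofLp.1 g.ofLp.1 ^ 2 + dist f.ofLp.2 g.ofLp.2 ^ 2) ^ (1 / (2:ℝ))
  rw [show (dist f.ofLp.1 g.ofLp.1) ^ (2:ℝ) = (dist f.ofLp.1 g.ofLp.1)^(2:ℕ) by
    rw [← Real.rpow_natCast (dist f.ofLp.1 g.ofLp.1) 2]; norm_num]
  rw [show (dist f.ofLp.2 g.ofLp.2) ^ (2:ℝ) = (dist f.ofLp.2 g.ofLp.2)^(2:ℕ) by
    rw [← Real.rpow_natCast (dist f.ofLp.2 g.ofLp.2) 2]; norm_num]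

/-- Given a monotone, surjective, `1`-Lipschitz reparametrization
`ρ : [0,∞) → [0,∞)` with `ρ(x) ≤ x` and `x ↦ x - ρ(x)` coarse, the straight-line map
`H((x,t),s) = (x-s, t(x-s)/x)`, defined on the cylinder `I_p c([0,1])` with
`p(x,t) = x - ρ(x) - 1`, is a coarse homotopy from the identity of `c([0,1])` to the
map `g(x,t) = (ρ(x), t·ρ(x)/x)`. -/
theorem straight_line_coarse_homotopy (ρ : ℝ → ℝ) (hmono : Monotone ρ)
    (hnonneg : ∀ x : ℝ, 0 ≤ x → 0 ≤ ρ x)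
    (hsurj : ∀ y : ℝ, 0 ≤ y → ∃ x : ℝ, 0 ≤ x ∧ ρ x = y)
    (hlip : ∀ a b : ℝ, 0 ≤ a → 0 ≤ b → |ρ a - ρ b| ≤ |a - b|)
    (hle : ∀ x : ℝ, 0 ≤ x → ρ x ≤ x)
    (hproper : ∀ B : Set ℝ, Bornology.IsBounded B →
      Bornology.IsBounded {x : ℝ | 0 ≤ x ∧ x - ρ x ∈ B})
    (p : c01 → ℝ)
    (hpdef : ∀ q : c01, p q =
      (q : EuclideanSpace ℝ (Fin 2)) 0 - ρ ((q : EuclideanSpace ℝ (Fin 2)) 0) - 1) :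
    ∃ H : Cyl p → c01, CoarseMap H ∧
      (∀ z : Cyl p,
        ((H z : EuclideanSpace ℝ (Fin 2)) 0 =
            ((z.val.ofLp.1 : EuclideanSpace ℝ (Fin 2)) 0) - z.val.ofLp.2) ∧
        ((H z : EuclideanSpace ℝ (Fin 2)) 1 =
            (z.val.ofLp.1 : EuclideanSpace ℝ (Fin 2)) 1 *
              (((z.val.ofLp.1 : EuclideanSpace ℝ (Fin 2)) 0) - z.val.ofLp.2) /
              ((z.val.ofLp.1 : EuclideanSpace ℝ (Fin 2)) 0))) ∧
      (∀ z : Cyl p, z.val.ofLp.2 = 0 → H z = z.val.ofLp.1) ∧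
      (∀ z : Cyl p,
        z.val.ofLp.2 = ((z.val.ofLp.1 : EuclideanSpace ℝ (Fin 2)) 0) -
            ρ ((z.val.ofLp.1 : EuclideanSpace ℝ (Fin 2)) 0) →
          ((H z : EuclideanSpace ℝ (Fin 2)) 0 =
              ρ ((z.val.ofLp.1 : EuclideanSpace ℝ (Fin 2)) 0) ∧
            (H z : EuclideanSpace ℝ (Fin 2)) 1 =
              (z.val.ofLp.1 : EuclideanSpace ℝ (Fin 2)) 1 *
                ρ ((z.val.ofLp.1 : EuclideanSpace ℝ (Fin 2)) 0) /
                ((z.val.ofLp.1 : EuclideanSpace ℝ (Fin 2)) 0))) := by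
  classical
  -- notation
  have hmem : ∀ v : c01, 0 ≤ (v : EuclideanSpace ℝ (Fin 2)) 1 ∧
      (v : EuclideanSpace ℝ (Fin 2)) 1 ≤ (v : EuclideanSpace ℝ (Fin 2)) 0 := fun v => v.2
  have hfacts : ∀ z : Cyl p,
      0 ≤ (z.val.ofLp.1 : EuclideanSpace ℝ (Fin 2)) 1 ∧
      (z.val.ofLp.1 : EuclideanSpace ℝ (Fin 2)) 1 ≤ (z.val.ofLp.1 : EuclideanSpace ℝ (Fin 2)) 0 ∧
      0 ≤ z.val.ofLp.2 ∧
      z.val.ofLp.2 ≤ (z.val.ofLp.1 : EuclideanSpace ℝ (Fin 2)) 0 -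
        ρ ((z.val.ofLp.1 : EuclideanSpace ℝ (Fin 2)) 0) ∧
      0 ≤ (z.val.ofLp.1 : EuclideanSpace ℝ (Fin 2)) 0 ∧
      0 ≤ ρ ((z.val.ofLp.1 : EuclideanSpace ℝ (Fin 2)) 0) := by
    intro z
    obtain ⟨h1, h2⟩ := hmem z.val.ofLp.1
    have h3 := z.2.1
    have h4 := z.2.2
    rw [hpdef] at h4
    have hx0 : 0 ≤ (z.val.ofLp.1 : EuclideanSpace ℝ (Fin 2)) 0 := le_trans h1 h2
    exact ⟨h1, h2, h3, by linarith, hx0, hnonneg _ hx0⟩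
  set E := EuclideanSpace ℝ (Fin 2) with hE
  -- the map
  refine ⟨fun z => ⟨(WithLp.toLp 2 ![(z.val.ofLp.1 : E) 0 - z.val.ofLp.2,
      (z.val.ofLp.1 : E) 1 * ((z.val.ofLp.1 : E) 0 - z.val.ofLp.2) / (z.val.ofLp.1 : E) 0] : E), ?_⟩,
    ?_, ?_, ?_, ?_⟩
  · -- membership in c01
    obtain ⟨h1, h2, h3, h4, h5, h6⟩ := hfacts z
    constructor
    · show (0:ℝ) ≤ _
      simp only [PiLp.toLp_apply, Matrix.cons_val_one, Matrix.head_cons]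
      exact div_nonneg (mul_nonneg h1 (by linarith)) h5
    · show _ ≤ _
      simp only [PiLp.toLp_apply, Matrix.cons_val_one, Matrix.head_cons, Matrix.cons_val_zero]
      exact aux_div_le h1 h2 (by linarith)
  · -- coarse map
    constructor
    · -- bornologous
      refine ⟨fun d => 6 * d, fun z z' => ?_⟩
      obtain ⟨h1, h2, h3, h4, h5, h6⟩ := hfacts z
      obtain ⟨h1', h2', h3', h4', h5', h6'⟩ := hfacts z'
      set x := (z.val.ofLp.1 : E) 0; set t := (z.val.ofLp.1 : E) 1; set s := z.val.ofLp.2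
      set x' := (z'.val.ofLp.1 : E) 0; set t' := (z'.val.ofLp.1 : E) 1; set s' := z'.val.ofLp.2
      have hsx : s ≤ x := by linarith
      have hsx' : s' ≤ x' := by linarith
      -- distances dominate coordinates
      have hzz : dist z z' =
          Real.sqrt (dist z.val.ofLp.1 z'.val.ofLp.1 ^ 2 + dist z.val.ofLp.2 z'.val.ofLp.2 ^ 2) := by
        have h : dist z z' = dist z.val z'.val := rfl
        rw [h, withlp2_dist]
      have hvv : dist z.val.ofLp.1 z'.val.ofLp.1 = dist (z.val.ofLp.1 : E) (z'.val.ofLp.1 : E) := rfl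
      have hsq := Real.sq_sqrt (show (0:ℝ) ≤
          dist z.val.ofLp.1 z'.val.ofLp.1 ^ 2 + dist z.val.ofLp.2 z'.val.ofLp.2 ^ 2 by positivity)
      have hsqrtnn := Real.sqrt_nonneg
        (dist z.val.ofLp.1 z'.val.ofLp.1 ^ 2 + dist z.val.ofLp.2 z'.val.ofLp.2 ^ 2)
      have hdnn : (0:ℝ) ≤ dist z.val.ofLp.1 z'.val.ofLp.1 := dist_nonneg
      have hdnn2 : (0:ℝ) ≤ dist z.val.ofLp.2 z'.val.ofLp.2 := dist_nonneg
      have hdv : dist (z.val.ofLp.1 : E) (z'.val.ofLp.1 : E) ≤ dist z z' := by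
        rw [hzz, ← hvv]
        nlinarith [sq_nonneg (dist z.val.ofLp.2 z'.val.ofLp.2)]
      have hds : |s - s'| ≤ dist z z' := by
        rw [hzz]
        have hss : dist z.val.ofLp.2 z'.val.ofLp.2 = |s - s'| := rfl
        rw [← hss]
        nlinarith [sq_nonneg (dist z.val.ofLp.1 z'.val.ofLp.1)]
      have hdx : |x - x'| ≤ dist z z' := le_trans (coord_dist_le' _ _ 0) hdv
      have hdt : |t - t'| ≤ dist z z' := le_trans (coord_dist_le' _ _ 1) hdv
      -- bound the image distance
      refine le_trans (le_of_eq (Subtype.dist_eq _ _)) ?_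
      refine le_trans (euclid_dist_le' _ _) ?_
      simp only [PiLp.toLp_apply, Matrix.cons_val_zero, Matrix.cons_val_one, Matrix.head_cons]
      have e1 : |x - s - (x' - s')| ≤ |x - x'| + |s - s'| := by
        have := abs_sub (x - x') (s - s')
        calc |x - s - (x' - s')| = |(x - x') - (s - s')| := by ring_nf
          _ ≤ |x - x'| + |s - s'| := abs_sub _ _
      have e2 : |t * (x - s) / x - t' * (x' - s') / x'| ≤
          |t - t'| + (|t - t'| + |s - s'| + |x - x'|) := by
        rw [tsub_div' h1 h2, tsub_div' h1' h2']
        calc |t - t * s / x - (t' - t' * s' / x')|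
            = |(t - t') - (t * s / x - t' * s' / x')| := by ring_nf
          _ ≤ |t - t'| + |t * s / x - t' * s' / x'| := abs_sub _ _
          _ ≤ |t - t'| + (|t - t'| + |s - s'| + |x - x'|) := by
              have := key_bound h1 h2 h3 hsx h1' h2' h3' hsx'
              linarith
      linarith
    · -- proper
      intro B hB
      set z₀ : c01 := ⟨(0 : E), ⟨le_rfl, le_rfl⟩⟩ with hz₀
      obtain ⟨R, hR⟩ := hB.subset_closedBall z₀
      obtain ⟨x₀, hx₀0, hx₀⟩ := hsurj (max R 0 + 1) (by positivity)
      rw [Metric.isBounded_iff]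
      refine ⟨3 * x₀, fun z hz z' hz' => ?_⟩
      have hbd : ∀ w : Cyl p,
          @dist (EuclideanSpace ℝ (Fin 2)) _ (WithLp.toLp 2 ![(w.val.ofLp.1 : E) 0 - w.val.ofLp.2,
            (w.val.ofLp.1 : E) 1 * ((w.val.ofLp.1 : E) 0 - w.val.ofLp.2) / (w.val.ofLp.1 : E) 0])
            0 ≤ R →
          (w.val.ofLp.1 : E) 0 ≤ x₀ ∧ (w.val.ofLp.1 : E) 1 ≤ x₀ ∧ w.val.ofLp.2 ≤ x₀ := by
        intro w hmemB
        obtain ⟨h1, h2, h3, h4, h5, h6⟩ := hfacts w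
        set x := (w.val.ofLp.1 : E) 0; set t := (w.val.ofLp.1 : E) 1; set s := w.val.ofLp.2
        have hco : |(x - s) - (0:E) 0| ≤ R := le_trans (coord_dist_le'
          (WithLp.toLp 2 ![x - s, t * (x - s) / x] : E) (0 : E) 0) hmemB
        have h0E : (0:E) 0 = 0 := rfl
        rw [h0E, sub_zero, abs_of_nonneg (by linarith : (0:ℝ) ≤ x - s)] at hco
        have hrx : ρ x ≤ R := by linarith
        have hxx₀ : x ≤ x₀ := by
          by_contra hcon
          push_neg at hcon
          have := hmono hcon.le
          rw [hx₀] at this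
          have : max R 0 + 1 ≤ ρ x := this
          have : R ≤ max R 0 := le_max_left _ _
          linarith
        exact ⟨hxx₀, by linarith, by linarith⟩
      obtain ⟨ha1, ha2, ha3⟩ := hbd z (by
        have h := hR hz
        rw [Metric.mem_closedBall] at h
        exact h)
      obtain ⟨hb1, hb2, hb3⟩ := hbd z' (by
        have h := hR hz'
        rw [Metric.mem_closedBall] at h
        exact h)
      obtain ⟨h1, h2, h3, h4, h5, h6⟩ := hfacts z
      obtain ⟨h1', h2', h3', h4', h5', h6'⟩ := hfacts z'
      have hdv : dist z.val.ofLp.1 z'.val.ofLp.1 ≤ |(z.val.ofLp.1 : E) 0 - (z'.val.ofLp.1 : E) 0| +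
          |(z.val.ofLp.1 : E) 1 - (z'.val.ofLp.1 : E) 1| := by
        have h : dist z.val.ofLp.1 z'.val.ofLp.1 = dist (z.val.ofLp.1 : E) (z'.val.ofLp.1 : E) := rfl
        rw [h]; exact euclid_dist_le' _ _
      have hsplit : dist z z' ≤ dist z.val.ofLp.1 z'.val.ofLp.1 + |z.val.ofLp.2 - z'.val.ofLp.2| := by
        have h : dist z z' = dist z.val z'.val := rfl
        rw [h, withlp2_dist]
        have h2 : dist z.val.ofLp.2 z'.val.ofLp.2 = |z.val.ofLp.2 - z'.val.ofLp.2| := rfl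
        rw [h2]
        exact sqrt_add_sq_le' dist_nonneg (abs_nonneg _)
      have bx : |(z.val.ofLp.1 : E) 0 - (z'.val.ofLp.1 : E) 0| ≤ x₀ := by
        rw [abs_sub_le_iff]; constructor <;> linarith
      have bt : |(z.val.ofLp.1 : E) 1 - (z'.val.ofLp.1 : E) 1| ≤ x₀ := by
        rw [abs_sub_le_iff]; constructor <;> linarith
      have bs : |z.val.ofLp.2 - z'.val.ofLp.2| ≤ x₀ := by
        rw [abs_sub_le_iff]; constructor <;> linarith
      linarith
  · -- coordinate formulas
    intro z
    constructor <;> simp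
  · -- at s = 0 it is the identity
    intro z hz
    obtain ⟨h1, h2, h3, h4, h5, h6⟩ := hfacts z
    apply Subtype.ext
    ext i
    fin_cases i
    · simp [show z.val.snd = 0 from hz]
    · show (z.val.ofLp.1 : E) 1 * ((z.val.ofLp.1 : E) 0 - z.val.ofLp.2) / (z.val.ofLp.1 : E) 0 =
        (z.val.ofLp.1 : E) 1
      rw [hz, sub_zero]
      rcases eq_or_ne ((z.val.ofLp.1 : E) 0) 0 with h | h
      · have : (z.val.ofLp.1 : E) 1 = 0 := le_antisymm (le_of_le_of_eq h2 h) h1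
        simp [show (z.val.fst : E) 1 = 0 from this]
      · rw [mul_div_assoc, div_self h, mul_one]
  · -- at s = x - ρ x it is g
    intro z hz
    constructor
    · show (z.val.ofLp.1 : E) 0 - z.val.ofLp.2 = _
      rw [hz]; ring
    · show (z.val.ofLp.1 : E) 1 * ((z.val.ofLp.1 : E) 0 - z.val.ofLp.2) / (z.val.ofLp.1 : E) 0 = _
      rw [hz]; ring_nf
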